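/- Let G be a finite simple graph with chromatic number χ(G), and let ψ be a partial proper χ(G)-colouring of G whose set of uncoloured vertices is exactly {u, v}, where u and v are adjacent. If the set ψ(N(u)) of colours appearing on the coloured neighbours of u has size χ(G)−1, the set ψ(N(v)) of colours appearing on the coloured neighbours of v has size χ(G)−2, and ψ(N(v)) ⊆ ψ(N(u)), then ψ is a Sudoku colouring of G. -/

import Mathlib

/-- A proper `k`-colouring of `G` using colours `{1, …, k}`. -/
def IsProperColouring {V : Type*} (G : SimpleGraph V) (k : ℕ) (φ : V → ℕ) : Prop :=
  (∀ v, φ v ∈ Finset.Icc 1 k) ∧ ∀ ⦃u v⦄, G.Adj u v → φ u ≠ φ v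

/-- A partial proper `k`-colouring of `G` (uncoloured vertices get `none`). -/
def IsPartialProper {V : Type*} (G : SimpleGraph V) (k : ℕ) (ψ : V → Option ℕ) : Prop :=
  (∀ v c, ψ v = some c → c ∈ Finset.Icc 1 k) ∧
    ∀ ⦃u v⦄, G.Adj u v → ∀ c, ψ u = some c → ψ v ≠ some c

/-- `φ` extends the partial colouring `ψ`. -/
def ExtendsPartial {V : Type*} (φ : V → ℕ) (ψ : V → Option ℕ) : Prop :=
  ∀ v c, ψ v = some c → φ v = c

/-- A Sudoku colouring: a partial proper `k`-colouring with exactly one extension to a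
proper `k`-colouring of all of `G`. -/
def IsSudoku {V : Type*} (G : SimpleGraph V) (k : ℕ) (ψ : V → Option ℕ) : Prop :=
  IsPartialProper G k ψ ∧ ∃! φ : V → ℕ, IsProperColouring G k φ ∧ ExtendsPartial φ ψ

/-- The Sudoku number: the least number of coloured vertices in a Sudoku colouring. -/
noncomputable def sudokuNumber {V : Type*} [Fintype V] (G : SimpleGraph V) (k : ℕ) : ℕ :=
  sInf {m | ∃ ψ : V → Option ℕ, IsSudoku G k ψ ∧
    (Finset.univ.filter fun v => (ψ v).isSome).card = m}

/-- The set of colours appearing on the coloured neighbours of `v` under `ψ`. -/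
def nbrColours {V : Type*} [Fintype V] [DecidableEq V] (G : SimpleGraph V)
    [DecidableRel G.Adj] (ψ : V → Option ℕ) (v : V) : Finset ℕ :=
  (G.neighborFinset v).biUnion fun u => (ψ u).toFinset

/-- A vertex is full (w.r.t. a proper `k`-colouring `φ`) if every colour other than its own
appears on its neighbourhood. -/
def IsFull {V : Type*} [Fintype V] [DecidableEq V] (G : SimpleGraph V)
    [DecidableRel G.Adj] (k : ℕ) (φ : V → ℕ) (v : V) : Prop :=
  (G.neighborFinset v).image φ = Finset.Icc 1 k \ {φ v}

/-- A proper `k`-colouring is 1-minimal if it has as few colour-1 vertices as possible. -/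
def IsOneMinimal {V : Type*} [Fintype V] (G : SimpleGraph V) (k : ℕ) (φ : V → ℕ) : Prop :=
  IsProperColouring G k φ ∧ ∀ φ' : V → ℕ, IsProperColouring G k φ' →
    (Finset.univ.filter fun v => φ v = 1).card ≤ (Finset.univ.filter fun v => φ' v = 1).card

theorem stmt_1 {V : Type*} [Fintype V] [DecidableEq V]
    (G : SimpleGraph V) [DecidableRel G.Adj] (k : ℕ)
    (hχ : G.chromaticNumber = k)
    (ψ : V → Option ℕ) (u v : V) (huv : u ≠ v) (hadj : G.Adj u v)
    (hpp : IsPartialProper G k ψ)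
    (hunc : ∀ w, ψ w = none ↔ w = u ∨ w = v)
    (hu : (nbrColours G ψ u).card = k - 1)
    (hv : (nbrColours G ψ v).card = k - 2)
    (hsub : nbrColours G ψ v ⊆ nbrColours G ψ u) :
    IsSudoku G k ψ := by
  classical
  -- k ≥ 2
  have hk2 : 2 ≤ k := by
    by_contra h
    push_neg at h
    have hcol : G.Colorable k := by
      rw [← SimpleGraph.chromaticNumber_le_iff_colorable, hχ]
    obtain ⟨C⟩ := hcol
    have hne := C.valid hadj
    interval_cases k
    · exact Fin.elim0 (C u)
    · exact hne (Subsingleton.elim _ _)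
  have hmem : ∀ x c, c ∈ nbrColours G ψ x ↔ ∃ w, G.Adj x w ∧ ψ w = some c := by
    intro x c
    simp [nbrColours, SimpleGraph.mem_neighborFinset, Option.mem_toFinset, Option.mem_def]
  have hsubIcc : ∀ x, nbrColours G ψ x ⊆ Finset.Icc 1 k := by
    intro x c hc
    obtain ⟨w, _, hwc⟩ := (hmem x c).1 hc
    exact hpp.1 w c hwc
  have hAcard : (Finset.Icc 1 k \ nbrColours G ψ u).card = 1 := by
    rw [Finset.card_sdiff_of_subset (hsubIcc u), Nat.card_Icc, hu]; omega
  obtain ⟨cu, hcu⟩ := Finset.card_eq_one.mp hAcard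
  have hcuA : cu ∈ Finset.Icc 1 k \ nbrColours G ψ u := hcu ▸ Finset.mem_singleton_self cu
  have hcuIcc : cu ∈ Finset.Icc 1 k := (Finset.mem_sdiff.mp hcuA).1
  have hcuN : cu ∉ nbrColours G ψ u := (Finset.mem_sdiff.mp hcuA).2
  have hcuNv : cu ∉ nbrColours G ψ v := fun h => hcuN (hsub h)
  have hBsub : insert cu (nbrColours G ψ v) ⊆ Finset.Icc 1 k := by
    intro c hc
    rcases Finset.mem_insert.mp hc with h | h
    · exact h ▸ hcuIcc
    · exact hsubIcc v h
  have hBcard : (Finset.Icc 1 k \ insert cu (nbrColours G ψ v)).card = 1 := by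
    rw [Finset.card_sdiff_of_subset hBsub, Finset.card_insert_of_notMem hcuNv, Nat.card_Icc, hv]; omega
  obtain ⟨cv, hcv⟩ := Finset.card_eq_one.mp hBcard
  have hcvB : cv ∈ Finset.Icc 1 k \ insert cu (nbrColours G ψ v) :=
    hcv ▸ Finset.mem_singleton_self cv
  have hcvIcc : cv ∈ Finset.Icc 1 k := (Finset.mem_sdiff.mp hcvB).1
  have hcvne : cv ≠ cu := fun h => (Finset.mem_sdiff.mp hcvB).2 (Finset.mem_insert.mpr (Or.inl h))
  have hcvN : cv ∉ nbrColours G ψ v := fun h =>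
    (Finset.mem_sdiff.mp hcvB).2 (Finset.mem_insert.mpr (Or.inr h))
  have hsome : ∀ w, w ≠ u → w ≠ v → ∃ c, ψ w = some c := by
    intro w h1 h2
    cases h : ψ w with
    | none => rcases (hunc w).1 h with h' | h' <;> [exact absurd h' h1; exact absurd h' h2]
    | some c => exact ⟨c, rfl⟩
  set φ0 : V → ℕ := fun w => if w = u then cu else if w = v then cv else (ψ w).getD 0 with hφ0
  have hφ0val : ∀ w, w ≠ u → w ≠ v → ψ w = some (φ0 w) := by
    intro w h1 h2
    obtain ⟨c, hc⟩ := hsome w h1 h2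
    simp [hφ0, h1, h2, hc]
  have hφ0u : φ0 u = cu := by simp [hφ0]
  have hφ0v : φ0 v = cv := by simp [hφ0, huv.symm]
  -- any proper extension avoids neighbour colours
  have havoid : ∀ (φ : V → ℕ), IsProperColouring G k φ → ExtendsPartial φ ψ →
      ∀ x, φ x ∉ nbrColours G ψ x := by
    intro φ hφ hext x hx
    obtain ⟨w, hadj', hwc⟩ := (hmem x (φ x)).1 hx
    exact hφ.2 hadj' (hext w (φ x) hwc).symm
  -- the canonical extension is proper
  have hφ0proper : IsProperColouring G k φ0 := by
    constructor
    · intro w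
      by_cases h1 : w = u
      · rw [h1, hφ0u]; exact hcuIcc
      by_cases h2 : w = v
      · rw [h2, hφ0v]; exact hcvIcc
      · exact hpp.1 w (φ0 w) (hφ0val w h1 h2)
    · intro a b hab hEq
      have hab' : a ≠ b := G.ne_of_adj hab
      by_cases h1 : a = u
      · subst h1
        by_cases h2 : b = v
        · subst h2; rw [hφ0u, hφ0v] at hEq; exact hcvne hEq.symm
        · have hb := hφ0val b (fun h => hab' h.symm) h2
          have : φ0 b ∈ nbrColours G ψ a := (hmem a (φ0 b)).2 ⟨b, hab, hb⟩
          rw [← hEq, hφ0u] at this; exact hcuN this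
      by_cases h2 : a = v
      · subst h2
        by_cases h3 : b = u
        · subst h3; rw [hφ0u, hφ0v] at hEq; exact hcvne hEq
        · have hb := hφ0val b h3 (fun h => hab' h.symm)
          have : φ0 b ∈ nbrColours G ψ a := (hmem a (φ0 b)).2 ⟨b, hab, hb⟩
          rw [← hEq, hφ0v] at this; exact hcvN this
      · have ha := hφ0val a h1 h2
        by_cases h3 : b = u
        · subst h3
          have : φ0 a ∈ nbrColours G ψ b := (hmem b (φ0 a)).2 ⟨a, hab.symm, ha⟩
          rw [hEq, hφ0u] at this; exact hcuN this
        by_cases h4 : b = v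
        · subst h4
          have : φ0 a ∈ nbrColours G ψ b := (hmem b (φ0 a)).2 ⟨a, hab.symm, ha⟩
          rw [hEq, hφ0v] at this; exact hcvN this
        · have hb := hφ0val b h3 h4
          rw [hEq] at ha
          exact hpp.2 hab (φ0 b) ha hb
  have hφ0ext : ExtendsPartial φ0 ψ := by
    intro w c hc
    have h1 : w ≠ u := by rintro rfl; rw [((hunc w).2 (Or.inl rfl))] at hc; exact Option.some_ne_none c hc.symm
    have h2 : w ≠ v := by rintro rfl; rw [((hunc w).2 (Or.inr rfl))] at hc; exact Option.some_ne_none c hc.symm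
    have := hφ0val w h1 h2
    rw [hc] at this
    exact (Option.some.injEq _ _ ▸ this).symm
  refine ⟨hpp, φ0, ⟨hφ0proper, hφ0ext⟩, ?_⟩
  rintro φ ⟨hφ, hext⟩
  -- φ u = cu
  have hφu : φ u = cu := by
    have : φ u ∈ Finset.Icc 1 k \ nbrColours G ψ u :=
      Finset.mem_sdiff.mpr ⟨hφ.1 u, havoid φ hφ hext u⟩
    rw [hcu] at this
    exact Finset.mem_singleton.mp this
  have hφv : φ v = cv := by
    have h1 : φ v ≠ cu := by rw [← hφu]; exact fun h => hφ.2 hadj h.symm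
    have : φ v ∈ Finset.Icc 1 k \ insert cu (nbrColours G ψ v) :=
      Finset.mem_sdiff.mpr ⟨hφ.1 v, by
        intro h
        rcases Finset.mem_insert.mp h with h' | h'
        · exact h1 h'
        · exact havoid φ hφ hext v h'⟩
    rw [hcv] at this
    exact Finset.mem_singleton.mp this
  funext w
  by_cases h1 : w = u
  · rw [h1, hφu, hφ0u]
  by_cases h2 : w = v
  · rw [h2, hφv, hφ0v]
  · rw [hext w (φ0 w) (hφ0val w h1 h2)]
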